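/- Let G be a finite simple graph with at least one vertex. The following four statements are equivalent: (1) α(G; c_G) = c(G); (2) there exists a 0-1 state on G; (3) there exists a 0-1 state v on G such that ∑_{i ∈ V(G)} c_G(i)·v(i) = α(G; c_G); (4) there exists a state v on G such that ∑_{i ∈ V(G)} c_G(i)·v(i) = α(G; c_G). -/

import Mathlib

open Finset

/-- A maximal clique of a simple graph, as a finite set of vertices. -/
def IsMaxClique {V : Type*} (G : SimpleGraph V) (C : Finset V) : Prop :=
  G.IsClique (C : Set V) ∧ ∀ D : Finset V, G.IsClique (D : Set V) → C ⊆ D → D = C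

/-- The finite set of all maximal cliques of a finite simple graph. -/
noncomputable def maxCliques {V : Type*} [Fintype V] (G : SimpleGraph V) :
    Finset (Finset V) := by
  classical exact Finset.univ.filter (fun C => IsMaxClique G C)

/-- `c(G)`: the total number of maximal cliques of `G`. -/
noncomputable def numMaxCliques {V : Type*} [Fintype V] (G : SimpleGraph V) : ℕ :=
  (maxCliques G).card

/-- `c_G(i)`: the number of maximal cliques of `G` containing the vertex `i`. -/
noncomputable def cG {V : Type*} [Fintype V] (G : SimpleGraph V) (i : V) : ℕ := by
  classical exact ((maxCliques G).filter (fun C => i ∈ C)).card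

/-- A state on a finite simple graph: values in `[0,1]` summing to `1` on each
maximal clique. -/
def IsGraphState {V : Type*} [Fintype V] (G : SimpleGraph V) (p : V → ℝ) : Prop :=
  (∀ i, 0 ≤ p i ∧ p i ≤ 1) ∧ ∀ C ∈ maxCliques G, ∑ i ∈ C, p i = 1

/-- An independent set of a simple graph: pairwise non-adjacent vertices. -/
def IsIndep {V : Type*} (G : SimpleGraph V) (I : Finset V) : Prop :=
  ∀ i ∈ I, ∀ j ∈ I, i ≠ j → ¬ G.Adj i j

/-- `α(G; w)`: the maximum weight of an independent set of `G` for the weight `w`. -/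
noncomputable def alphaW {V : Type*} [Fintype V] (G : SimpleGraph V) (w : V → ℝ) : ℝ :=
  sSup { x : ℝ | ∃ I : Finset V, IsIndep G I ∧ x = ∑ i ∈ I, w i }

set_option linter.unusedSectionVars false

section Aux
variable {V : Type*} [Fintype V] [DecidableEq V] (G : SimpleGraph V)

lemma mem_maxCliques' {C : Finset V} :
    C ∈ maxCliques G ↔ IsMaxClique G C := by
  simp [maxCliques]

lemma exists_maxClique_supset {D : Finset V} (hD : G.IsClique (D : Set V)) :
    ∃ C ∈ maxCliques G, D ⊆ C := by
  classical
  obtain ⟨C, hC, hmax⟩ := Finset.exists_max_image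
    (Finset.univ.filter (fun E : Finset V => G.IsClique (E : Set V) ∧ D ⊆ E)) Finset.card
    ⟨D, by simp [hD]⟩
  simp only [Finset.mem_filter, Finset.mem_univ, true_and] at hC hmax
  refine ⟨C, (mem_maxCliques' G).2 ⟨hC.1, fun E hE hCE => ?_⟩, hC.2⟩
  exact (Finset.eq_of_subset_of_card_le hCE (hmax E ⟨hE, hC.2.trans hCE⟩)).symm

lemma sum_cG_eq (I : Finset V) :
    ∑ i ∈ I, cG G i = ∑ C ∈ maxCliques G, (I ∩ C).card := by
  classical
  simp only [cG, Finset.card_filter]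
  rw [Finset.sum_comm]
  refine Finset.sum_congr rfl fun C _ => ?_
  rw [← Finset.filter_mem_eq_inter, Finset.card_filter]
  exact Finset.sum_congr rfl fun i _ => by congr

lemma sum_weight_eq (v : V → ℝ) :
    ∑ i : V, (cG G i : ℝ) * v i = ∑ C ∈ maxCliques G, ∑ i ∈ C, v i := by
  classical
  have h : ∀ i, (cG G i : ℝ) * v i = ∑ C ∈ maxCliques G, if i ∈ C then v i else 0 := by
    intro i
    simp only [cG, Finset.card_filter, Nat.cast_sum, Finset.sum_mul]
    refine Finset.sum_congr rfl fun C _ => ?_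
    split <;> simp
  simp only [h]
  rw [Finset.sum_comm]
  refine Finset.sum_congr rfl fun C _ => ?_
  simp [Finset.sum_ite_mem]

lemma state_sum (v : V → ℝ) (hv : IsGraphState G v) :
    ∑ i : V, (cG G i : ℝ) * v i = (numMaxCliques G : ℝ) := by
  rw [sum_weight_eq, Finset.sum_congr rfl hv.2, Finset.sum_const, numMaxCliques]
  simp

lemma indep_inter_card_le {I C : Finset V} (hI : IsIndep G I)
    (hC : G.IsClique (C : Set V)) : (I ∩ C).card ≤ 1 := by
  rw [Finset.card_le_one]
  intro a ha b hb
  simp only [Finset.mem_inter] at ha hb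
  by_contra hne
  exact hI a ha.1 b hb.1 hne (hC ha.2 hb.2 hne)

end Aux

/-- **Parametric characterization of (non-)KS-contextuality.** For a finite simple graph
`G` with at least one vertex, the following are equivalent:
1. `α(G; c_G) = c(G)`;
2. there exists a 0-1 state on `G`;
3. there exists a 0-1 state `v` on `G` with `∑ i, c_G(i)·v(i) = α(G; c_G)`;
4. there exists a state `v` on `G` with `∑ i, c_G(i)·v(i) = α(G; c_G)`. -/
theorem ks_contextuality_tfae {V : Type*} [Fintype V] [Nonempty V] (G : SimpleGraph V) :
    List.TFAE
      [ alphaW G (fun i => (cG G i : ℝ)) = (numMaxCliques G : ℝ),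
        ∃ v : V → ℝ, IsGraphState G v ∧ (∀ i, v i = 0 ∨ v i = 1),
        ∃ v : V → ℝ, (IsGraphState G v ∧ (∀ i, v i = 0 ∨ v i = 1)) ∧
          ∑ i : V, (cG G i : ℝ) * v i = alphaW G (fun i => (cG G i : ℝ)),
        ∃ v : V → ℝ, IsGraphState G v ∧
          ∑ i : V, (cG G i : ℝ) * v i = alphaW G (fun i => (cG G i : ℝ)) ] := by
  classical
  set w : V → ℝ := fun i => (cG G i : ℝ) with hw
  set S : Set ℝ := { x : ℝ | ∃ I : Finset V, IsIndep G I ∧ x = ∑ i ∈ I, w i } with hS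
  have halpha : alphaW G w = sSup S := rfl
  have hSfin : S.Finite :=
    Set.Finite.subset (Set.finite_range (fun I : Finset V => ∑ i ∈ I, w i))
      (by rintro x ⟨I, -, rfl⟩; exact ⟨I, rfl⟩)
  have hSne : S.Nonempty := ⟨0, ∅, fun i hi => absurd hi (by simp), by simp⟩
  have hle : ∀ x ∈ S, x ≤ (numMaxCliques G : ℝ) := by
    rintro x ⟨I, hI, rfl⟩
    have hn : ∑ i ∈ I, cG G i ≤ numMaxCliques G := by
      rw [sum_cG_eq]
      calc ∑ C ∈ maxCliques G, (I ∩ C).card ≤ ∑ C ∈ maxCliques G, 1 :=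
            Finset.sum_le_sum fun C hC =>
              indep_inter_card_le G hI ((mem_maxCliques' G).1 hC).1
        _ = numMaxCliques G := by simp [numMaxCliques]
    calc ∑ i ∈ I, w i = ((∑ i ∈ I, cG G i : ℕ) : ℝ) := by push_cast [hw]; rfl
      _ ≤ _ := Nat.cast_le.2 hn
  have halpha_le : alphaW G w ≤ (numMaxCliques G : ℝ) := csSup_le hSne hle
  tfae_have 1 → 2 := by
    intro h1
    rw [halpha] at h1
    obtain ⟨I, hI, hIsum⟩ := hSne.csSup_mem hSfin
    have hcast : (∑ i ∈ I, cG G i : ℕ) = numMaxCliques G := by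
      have : ((∑ i ∈ I, cG G i : ℕ) : ℝ) = (numMaxCliques G : ℝ) := by
        rw [← h1, hIsum]; push_cast [hw]; rfl
      exact_mod_cast this
    have hcard : ∑ C ∈ maxCliques G, (I ∩ C).card = ∑ C ∈ maxCliques G, 1 := by
      rw [sum_cG_eq] at hcast
      rw [hcast]; simp [numMaxCliques]
    have hone : ∀ C ∈ maxCliques G, (I ∩ C).card = 1 :=
      (Finset.sum_eq_sum_iff_of_le (fun C hC =>
        indep_inter_card_le G hI ((mem_maxCliques' G).1 hC).1)).1 hcard
    refine ⟨fun i => if i ∈ I then 1 else 0,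
      ⟨fun i => by dsimp only; split <;> norm_num, ?_⟩,
      fun i => by dsimp only; split <;> simp⟩
    intro C hC
    have h2 : ∑ i ∈ C, (if i ∈ I then (1:ℝ) else 0) = ((C ∩ I).card : ℝ) := by
      rw [Finset.sum_ite_mem]; simp
    rw [h2, Finset.inter_comm, hone C hC]; norm_num
  tfae_have 2 → 3 := by
    rintro ⟨v, hv, h01⟩
    set I : Finset V := Finset.univ.filter (fun i => v i = 1) with hIdef
    have hI : IsIndep G I := by
      intro i hi j hj hne hadj
      have hclique : G.IsClique (({i, j} : Finset V) : Set V) := by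
        simp only [Finset.coe_insert, Finset.coe_singleton]
        exact (haveI := G.symm; Set.pairwise_pair_of_symmetric (r := G.Adj)).2 fun _ => hadj
      obtain ⟨C, hC, hsub⟩ := exists_maxClique_supset G hclique
      have h1 : ∑ k ∈ ({i, j} : Finset V), v k ≤ ∑ k ∈ C, v k :=
        Finset.sum_le_sum_of_subset_of_nonneg hsub (fun k _ _ => (hv.1 k).1)
      rw [Finset.sum_pair hne, hv.2 C hC] at h1
      simp only [hIdef, Finset.mem_filter] at hi hj
      rw [hi.2, hj.2] at h1
      linarith
    have hval : ∑ i : V, (cG G i : ℝ) * v i = ∑ i ∈ I, (cG G i : ℝ) := by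
      have h1 : ∑ i ∈ I, (cG G i : ℝ) * v i = ∑ i : V, (cG G i : ℝ) * v i :=
        Finset.sum_subset (Finset.subset_univ I) (fun i _ hi => by
          have hv0 : v i = 0 := (h01 i).resolve_right (by simpa [hIdef] using hi)
          rw [hv0, mul_zero])
      rw [← h1]
      exact Finset.sum_congr rfl fun i hi => by
        simp only [hIdef, Finset.mem_filter] at hi
        rw [hi.2, mul_one]
    have hstate := state_sum G v hv
    have hmemS : (numMaxCliques G : ℝ) ∈ S := ⟨I, hI, by rw [← hstate]; exact hval⟩
    have heq : alphaW G w = (numMaxCliques G : ℝ) :=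
      le_antisymm halpha_le (le_csSup hSfin.bddAbove hmemS)
    exact ⟨v, ⟨hv, h01⟩, by rw [hstate, heq]⟩
  tfae_have 3 → 4 := fun ⟨v, h, hs⟩ => ⟨v, h.1, hs⟩
  tfae_have 4 → 1 := by
    rintro ⟨v, hv, hsum⟩
    rw [← hsum, state_sum G v hv]
  tfae_finish
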